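/- Assume the Common Givens: P_i is a preference order on C consistent with Q; the query is the pair (c_j,c_k) with P_i(c_j,c_k); neither (c_j,c_k) nor (c_k,c_j) belongs to Q; and PW = {pw_1,…,pw_l} is a nonempty set of possible winners enumerated in decreasing order of P_i. Suppose that none of the following three positional conditions holds: (1) P_i(c_j,pw_1) and P_i(pw_l,c_k); (2) P_i(c_j,pw_1) and c_k ∈ [pw_1, P_i, pw_l]; (3) P_i(pw_l,c_k) and c_j ∈ [pw_1, P_i, pw_l] — equivalently, either both c_j,c_k ∈ [pw_1, P_i, pw_l], or both c_j,c_k are above pw_1 in P_i, or both c_j,c_k are below pw_l in P_i. Then no preference order P' ≠ P_i exists that both locally dominates P_i (given PW) and belongs to μ(P_i); in particular the voter cannot manipulate on this query. -/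
import Mathlib


/-- A preference order: a strict total order on candidates. -/
def IsPref {C : Type*} (P : C → C → Prop) : Prop :=
  (∀ a b : C, a ≠ b → P a b ∨ P b a) ∧ (∀ a : C, ¬ P a a) ∧
    ∀ a b c : C, P a b → P b c → P a c

/-- The Borda score that preference order `P` gives candidate `c`. -/
noncomputable def borda {C : Type*} [Fintype C] (P : C → C → Prop) (c : C) : ℕ :=
  1 + Set.ncard {c' : C | P c c'}

/-- `c` is the outcome `F(s, P)`: it beats every other candidate either in total score
`s + borda`, or on equal total score by the tie-breaking order `tb`. -/
def IsWinner {C : Type*} [Fintype C] (tb : C → C → Prop) (s : C → ℕ)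
    (P : C → C → Prop) (c : C) : Prop :=
  ∀ c' : C, c' ≠ c →
    s c' + borda P c' < s c + borda P c ∨
      (s c' + borda P c' = s c + borda P c ∧ tb c c')

/-- `s` is a possible world for the set `PW` of possible winners. -/
def PossibleWorld {C : Type*} [Fintype C] (tb : C → C → Prop) (PW : Set C)
    (s : C → ℕ) : Prop :=
  ∀ R : C → C → Prop, IsPref R → ∀ c : C, IsWinner tb s R c → c ∈ PW

/-- `P'` locally dominates `P` given the possible-winner set `PW`. -/
def LocDom {C : Type*} [Fintype C] (tb : C → C → Prop) (PW : Set C)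
    (P' P : C → C → Prop) : Prop :=
  (∀ s : C → ℕ, PossibleWorld tb PW s →
      ∀ w' w : C, IsWinner tb s P' w' → IsWinner tb s P w → w' = w ∨ P w' w) ∧
  ∃ s : C → ℕ, PossibleWorld tb PW s ∧
      ∃ w' w : C, IsWinner tb s P' w' ∧ IsWinner tb s P w ∧ P w' w

/-- The (closed) segment `[c, P, c']` of candidates between `c` and `c'`. -/
def seg {C : Type*} (P : C → C → Prop) (c c' : C) : Set C :=
  {d : C | (d = c ∨ P c d) ∧ (d = c' ∨ P d c')}

/-- `Q` is a strict partial order (consistent, transitively closed reported preferences). -/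
def IsSPO {C : Type*} (Q : C → C → Prop) : Prop :=
  (∀ a : C, ¬ Q a a) ∧ ∀ a b c : C, Q a b → Q b c → Q a c

/-- `P` is consistent with (extends) the reported preferences `Q`, written `P ⊨ Q`. -/
def Extends {C : Type*} (P Q : C → C → Prop) : Prop := ∀ a b : C, Q a b → P a b

/-- The swap distance between two preference orders: the number of (unordered) pairs of
candidates ordered differently, counted here as ordered pairs `(a, b)` with
`P a b` and `P' b a`. -/
noncomputable def dswap {C : Type*} [Fintype C] (P P' : C → C → Prop) : ℕ :=
  Set.ncard {p : C × C | P p.1 p.2 ∧ P' p.2 p.1}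

/-- `P` is a preference order consistent with the transitive closure of `Q ∪ {(ck, cj)}`
(for a transitive total order this is the same as extending `Q` and putting `ck` above `cj`). -/
def Feasible {C : Type*} (Q : C → C → Prop) (cj ck : C) (P : C → C → Prop) : Prop :=
  IsPref P ∧ Extends P Q ∧ P ck cj

/-- `P ∈ μ(Pi)`: among all preference orders consistent with the transitive closure of
`Q ∪ {(ck, cj)}`, `P` minimizes the swap distance to `Pi`. -/
def InMu {C : Type*} [Fintype C] (Q : C → C → Prop) (cj ck : C)
    (Pi P : C → C → Prop) : Prop :=
  Feasible Q cj ck P ∧ ∀ R : C → C → Prop, Feasible Q cj ck R → dswap Pi P ≤ dswap Pi R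

lemma borda_pos {C : Type*} [Fintype C] (P : C → C → Prop) (c : C) : 1 ≤ borda P c := by
  unfold borda; omega

lemma borda_le_card {C : Type*} [Fintype C] {R : C → C → Prop} (hR : IsPref R) (c : C) :
    borda R c ≤ Fintype.card C := by
  have h1 : c ∉ {c' : C | R c c'} := hR.2.1 c
  have h3 := Set.ncard_insert_of_notMem h1 (Set.toFinite _)
  have h4 := Set.ncard_le_ncard (Set.subset_univ (insert c {c' : C | R c c'})) Set.finite_univ
  rw [Set.ncard_univ, Nat.card_eq_fintype_card] at h4
  rw [h3] at h4
  unfold borda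
  omega

lemma no_strict {C : Type*} [Fintype C] {tb : C → C → Prop} (htb : IsPref tb)
    {PW : Set C} {P1 P2 : C → C → Prop} (h1 : IsPref P1) (h2 : IsPref P2)
    (hb : ∀ w ∈ PW, borda P2 w = borda P1 w)
    (s : C → ℕ) (hs : PossibleWorld tb PW s) (w' w : C)
    (hw' : IsWinner tb s P2 w') (hw : IsWinner tb s P1 w) (h3 : P1 w' w) : False := by
  have hwPW : w ∈ PW := hs P1 h1 w hw
  have hw'PW : w' ∈ PW := hs P2 h2 w' hw'
  have hne : w ≠ w' := by rintro rfl; exact h1.2.1 w h3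
  have e1 := hw' w hne
  have e2 := hw w' hne.symm
  rw [hb w hwPW, hb w' hw'PW] at e1
  rcases e1 with h | ⟨heq, htb1⟩ <;> rcases e2 with h' | ⟨heq', htb2⟩
  · omega
  · omega
  · omega
  · exact htb.2.1 w (htb.2.2 w w' w htb2 htb1)

lemma bad_world {C : Type*} [Fintype C] (tb : C → C → Prop) (htb : IsPref tb)
    (PW : Set C) (P1 P2 : C → C → Prop) (h1 : IsPref P1) (h2 : IsPref P2)
    (x y : C) (hx : x ∈ PW) (hy : y ∈ PW) (hxy : P1 x y)
    (hk : borda P2 x + borda P1 y < borda P1 x + borda P2 y) :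
    ∃ s : C → ℕ, PossibleWorld tb PW s ∧ IsWinner tb s P2 y ∧ IsWinner tb s P1 x := by
  classical
  set n := Fintype.card C with hn
  have hxny : x ≠ y := fun h => h1.2.1 x (h ▸ hxy)
  set g : ℕ := if tb x y then 0 else 1 with hgdef
  have hgcases : (g = 0 ∧ tb x y) ∨ (g = 1 ∧ tb y x) := by
    rw [hgdef]
    by_cases h : tb x y
    · left; simp [h]
    · right; exact ⟨by simp [h], (htb.1 x y hxny).resolve_left h⟩
  set s : C → ℕ := fun c =>
    if c = x then 4 * n - borda P1 x
    else if c = y then 4 * n - g - borda P1 y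
    else if c ∈ PW then 2 * n else 0 with hsdef
  have hsx : s x = 4 * n - borda P1 x := by simp [hsdef]
  have hsy : s y = 4 * n - g - borda P1 y := by
    have : ¬ (y = x) := fun h => hxny h.symm
    simp [hsdef, this]
  have hsother : ∀ c, c ≠ x → c ≠ y → c ∈ PW → s c = 2 * n := by
    intro c hc1 hc2 hc3; simp [hsdef, hc1, hc2, hc3]
  have hsnon : ∀ c, c ≠ x → c ≠ y → c ∉ PW → s c = 0 := by
    intro c hc1 hc2 hc3; simp [hsdef, hc1, hc2, hc3]
  have b1x1 : 1 ≤ borda P1 x := borda_pos _ _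
  have b1xn : borda P1 x ≤ n := borda_le_card h1 x
  have b1y1 : 1 ≤ borda P1 y := borda_pos _ _
  have b1yn : borda P1 y ≤ n := borda_le_card h1 y
  have b2x1 : 1 ≤ borda P2 x := borda_pos _ _
  have b2xn : borda P2 x ≤ n := borda_le_card h2 x
  have b2y1 : 1 ≤ borda P2 y := borda_pos _ _
  have b2yn : borda P2 y ≤ n := borda_le_card h2 y
  have hg1 : g ≤ 1 := by rcases hgcases with ⟨h, _⟩ | ⟨h, _⟩ <;> omega
  refine ⟨s, ?_, ?_, ?_⟩
  · -- PossibleWorld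
    intro R hR c hc
    by_contra hcPW
    have hcx : c ≠ x := fun h => hcPW (h ▸ hx)
    have hcy : c ≠ y := fun h => hcPW (h ▸ hy)
    have hw := hc x (fun h => hcx h.symm)
    rw [hsx, hsnon c hcx hcy hcPW] at hw
    have e1 : 1 ≤ borda R x := borda_pos _ _
    have e2 : borda R c ≤ n := borda_le_card hR c
    rcases hw with h | ⟨h, _⟩ <;> omega
  · -- IsWinner s P2 y
    intro c' hc'
    by_cases hcx : c' = x
    · subst hcx
      rw [hsx, hsy]
      rcases hgcases with ⟨hg0, htbxy⟩ | ⟨hg1', htbyx⟩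
      · left; omega
      · rcases Nat.lt_or_ge (4 * n - borda P1 c' + borda P2 c')
          (4 * n - g - borda P1 y + borda P2 y) with hlt | hge
        · left; exact hlt
        · right; exact ⟨by omega, htbyx⟩
    · by_cases hcp : c' ∈ PW
      · left
        rw [hsy, hsother c' hcx hc' hcp]
        have e1 : borda P2 c' ≤ n := borda_le_card h2 c'
        omega
      · left
        rw [hsy, hsnon c' hcx hc' hcp]
        have e1 : borda P2 c' ≤ n := borda_le_card h2 c'
        omega
  · -- IsWinner s P1 x
    intro c' hc'
    by_cases hcy : c' = y
    · subst hcy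
      rw [hsx, hsy]
      rcases hgcases with ⟨hg0, htbxy⟩ | ⟨hg1', _⟩
      · right; exact ⟨by omega, htbxy⟩
      · left; omega
    · by_cases hcp : c' ∈ PW
      · left
        rw [hsx, hsother c' hc' hcy hcp]
        have e1 : borda P1 c' ≤ n := borda_le_card h1 c'
        omega
      · left
        rw [hsx, hsnon c' hc' hcy hcp]
        have e1 : borda P1 c' ≤ n := borda_le_card h1 c'
        omega

theorem statement14 {C : Type*} [Fintype C]
    (tb : C → C → Prop) (htb : IsPref tb)
    (Q : C → C → Prop) (hQ : IsSPO Q)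
    (Pi : C → C → Prop) (hPi : IsPref Pi) (hPiQ : Extends Pi Q)
    (cj ck : C) (hjk : Pi cj ck) (hQjk : ¬ Q cj ck) (hQkj : ¬ Q ck cj)
    (l : ℕ) (hl : 0 < l) (pw : Fin l → C) (hinj : Function.Injective pw)
    (horder : ∀ a b : Fin l, Pi (pw a) (pw b) ↔ a < b)
    (hnot1 : ¬ (Pi cj (pw ⟨0, hl⟩) ∧ Pi (pw ⟨l - 1, by omega⟩) ck))
    (hnot2 : ¬ (Pi cj (pw ⟨0, hl⟩) ∧ ck ∈ seg Pi (pw ⟨0, hl⟩) (pw ⟨l - 1, by omega⟩)))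
    (hnot3 : ¬ (Pi (pw ⟨l - 1, by omega⟩) ck ∧ cj ∈ seg Pi (pw ⟨0, hl⟩) (pw ⟨l - 1, by omega⟩))) :
    ¬ ∃ P' : C → C → Prop, P' ≠ Pi ∧
        LocDom tb (Set.range pw) P' Pi ∧ InMu Q cj ck Pi P' := by
  classical
  rintro ⟨P', hPne, ⟨hdom1, hdom2⟩, ⟨⟨hP'pref, hP'Q, hP'kj⟩, hmin⟩⟩
  set S : Set C := seg Pi cj ck with hSdef
  have asymPi : ∀ {a b : C}, Pi a b → ¬ Pi b a := fun h h' => hPi.2.1 _ (hPi.2.2 _ _ _ h h')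
  have asymP' : ∀ {a b : C}, P' a b → ¬ P' b a :=
    fun h h' => hP'pref.2.1 _ (hP'pref.2.2 _ _ _ h h')
  have totPi : ∀ a b : C, a ≠ b → ¬ Pi a b → Pi b a :=
    fun a b hne h => (hPi.1 a b hne).resolve_left h
  have hcjS : cj ∈ S := ⟨Or.inl rfl, Or.inr hjk⟩
  have hckS : ck ∈ S := ⟨Or.inr hjk, Or.inl rfl⟩
  have hout : ∀ a, a ∉ S → (∀ d ∈ S, Pi a d) ∨ (∀ d ∈ S, Pi d a) := by
    intro a ha
    by_cases h1 : a = cj ∨ Pi cj a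
    · right
      have h2 : ¬ (a = ck ∨ Pi a ck) := fun h2 => ha ⟨h1, h2⟩
      push_neg at h2
      have hcka : Pi ck a := totPi a ck h2.1 h2.2
      intro d hd
      rcases hd.2 with rfl | h
      · exact hcka
      · exact hPi.2.2 _ _ _ h hcka
    · left
      push_neg at h1
      have hacj : Pi a cj := totPi cj a (fun h => h1.1 h.symm) h1.2
      intro d hd
      rcases hd.1 with rfl | h
      · exact hacj
      · exact hPi.2.2 _ _ _ hacj h
  -- Key structural lemma: P' agrees with Pi outside S × S
  have hkey : ∀ a b : C, ¬ (a ∈ S ∧ b ∈ S) → (P' a b ↔ Pi a b) := by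
    by_contra hcon
    push_neg at hcon
    obtain ⟨a, b, hab, hniff⟩ := hcon
    have hab' : ¬ (a ∈ S ∧ b ∈ S) := fun h => hab h.1 h.2
    obtain ⟨u, v, huv, hvu, hUV⟩ : ∃ u v : C, Pi u v ∧ P' v u ∧ ¬(u ∈ S ∧ v ∈ S) := by
      rcases hniff with ⟨hp', hnp⟩ | ⟨hnp', hp⟩
      · have hne : a ≠ b := fun h => hP'pref.2.1 a (h ▸ hp')
        exact ⟨b, a, totPi a b hne hnp, hp', fun h => hab' ⟨h.2, h.1⟩⟩
      · have hne : a ≠ b := fun h => hPi.2.1 a (h ▸ hp)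
        exact ⟨a, b, hp, (hP'pref.1 a b hne).resolve_left hnp', hab'⟩
    set P'' : C → C → Prop := fun p q => if p ∈ S ∧ q ∈ S then P' p q else Pi p q with hP''
    have hdef : ∀ p q : C, P'' p q = if p ∈ S ∧ q ∈ S then P' p q else Pi p q :=
      fun _ _ => rfl
    have hP''pref : IsPref P'' := by
      refine ⟨?_, ?_, ?_⟩
      · intro p q hne
        rw [hdef, hdef]
        by_cases h : p ∈ S ∧ q ∈ S
        · rw [if_pos h, if_pos ⟨h.2, h.1⟩]; exact hP'pref.1 p q hne
        · rw [if_neg h, if_neg (fun h' => h ⟨h'.2, h'.1⟩)]; exact hPi.1 p q hne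
      · intro p
        rw [hdef]
        by_cases h : p ∈ S ∧ p ∈ S
        · rw [if_pos h]; exact hP'pref.2.1 p
        · rw [if_neg h]; exact hPi.2.1 p
      · intro p q r hpq hqr
        rw [hdef] at hpq hqr ⊢
        by_cases hp : p ∈ S <;> by_cases hq : q ∈ S <;> by_cases hr : r ∈ S
        · rw [if_pos ⟨hp, hq⟩] at hpq
          rw [if_pos ⟨hq, hr⟩] at hqr
          rw [if_pos ⟨hp, hr⟩]
          exact hP'pref.2.2 _ _ _ hpq hqr
        · rw [if_pos ⟨hp, hq⟩] at hpq
          rw [if_neg (fun h => hr h.2)] at hqr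
          rw [if_neg (fun h => hr h.2)]
          rcases hout r hr with h | h
          · exact absurd (h q hq) (asymPi hqr)
          · exact h p hp
        · rw [if_neg (fun h => hq h.2)] at hpq
          rw [if_neg (fun h => hq h.1)] at hqr
          rcases hout q hq with h | h
          · exact absurd (h p hp) (asymPi hpq)
          · exact absurd hqr (asymPi (h r hr))
        · rw [if_neg (fun h => hq h.2)] at hpq
          rw [if_neg (fun h => hq h.1)] at hqr
          rw [if_neg (fun h => hr h.2)]
          exact hPi.2.2 _ _ _ hpq hqr
        · rw [if_neg (fun h => hp h.1)] at hpq
          rw [if_pos ⟨hq, hr⟩] at hqr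
          rw [if_neg (fun h => hp h.1)]
          rcases hout p hp with h | h
          · exact h r hr
          · exact absurd hpq (asymPi (h q hq))
        · rw [if_neg (fun h => hp h.1)] at hpq
          rw [if_neg (fun h => hr h.2)] at hqr
          rw [if_neg (fun h => hp h.1)]
          exact hPi.2.2 _ _ _ hpq hqr
        · rw [if_neg (fun h => hp h.1)] at hpq
          rw [if_neg (fun h => hq h.1)] at hqr
          rw [if_neg (fun h => hp h.1)]
          exact hPi.2.2 _ _ _ hpq hqr
        · rw [if_neg (fun h => hp h.1)] at hpq
          rw [if_neg (fun h => hq h.1)] at hqr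
          rw [if_neg (fun h => hp h.1)]
          exact hPi.2.2 _ _ _ hpq hqr
    have hP''feas : Feasible Q cj ck P'' := by
      refine ⟨hP''pref, ?_, ?_⟩
      · intro a' b' hq
        rw [hdef]
        by_cases h : a' ∈ S ∧ b' ∈ S
        · rw [if_pos h]; exact hP'Q _ _ hq
        · rw [if_neg h]; exact hPiQ _ _ hq
      · rw [hdef, if_pos ⟨hckS, hcjS⟩]; exact hP'kj
    have hsub : {p : C × C | Pi p.1 p.2 ∧ P'' p.2 p.1} ⊆ {p : C × C | Pi p.1 p.2 ∧ P' p.2 p.1} := by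
      rintro ⟨p, q⟩ ⟨hpq, hqp⟩
      refine ⟨hpq, ?_⟩
      rw [hdef] at hqp
      by_cases h : q ∈ S ∧ p ∈ S
      · rwa [if_pos h] at hqp
      · rw [if_neg h] at hqp; exact absurd hqp (asymPi hpq)
    have hnotmem : (u, v) ∉ {p : C × C | Pi p.1 p.2 ∧ P'' p.2 p.1} := by
      rintro ⟨-, hm⟩
      rw [hdef, if_neg (fun h => hUV ⟨h.2, h.1⟩)] at hm
      exact asymPi huv hm
    have hlt : dswap Pi P'' < dswap Pi P' := by
      unfold dswap
      exact Set.ncard_lt_ncard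
        ((Set.ssubset_iff_of_subset hsub).mpr ⟨(u, v), ⟨huv, hvu⟩, hnotmem⟩)
        (Set.toFinite _)
    exact absurd (hmin P'' hP''feas) (by omega)
  -- Borda consequences
  have hb_out : ∀ c, c ∉ S → borda P' c = borda Pi c := by
    intro c hc
    have hset : {c' : C | P' c c'} = {c' : C | Pi c c'} := by
      ext c'; exact hkey c c' (fun h => hc h.1)
    unfold borda
    rw [hset]
  have hb_cj : borda P' cj ≤ borda Pi cj := by
    have hsub : {c' : C | P' cj c'} ⊆ {c' : C | Pi cj c'} := by
      intro c' hc'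
      by_contra hn
      have hne : c' ≠ cj := fun h => hP'pref.2.1 cj (h ▸ hc')
      have hpc : Pi c' cj := totPi cj c' (fun h => hne h.symm) hn
      have hc'S : c' ∉ S := by
        rintro ⟨h1, -⟩
        rcases h1 with rfl | h
        · exact hne rfl
        · exact asymPi h hpc
      exact asymP' hc' ((hkey c' cj (fun h => hc'S h.1)).mpr hpc)
    unfold borda
    exact Nat.add_le_add_left (Set.ncard_le_ncard hsub (Set.toFinite _)) 1
  have hb_ck : borda Pi ck ≤ borda P' ck := by
    have hsub : {c' : C | Pi ck c'} ⊆ {c' : C | P' ck c'} := by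
      intro c' hc'
      have hc'S : c' ∉ S := by
        rintro ⟨-, h2⟩
        rcases h2 with h | h
        · exact hPi.2.1 ck (h ▸ hc')
        · exact asymPi h hc'
      exact (hkey ck c' (fun h => hc'S h.2)).mpr hc'
    unfold borda
    exact Nat.add_le_add_left (Set.ncard_le_ncard hsub (Set.toFinite _)) 1
  -- PW endpoints
  have hl1 : l - 1 < l := by omega
  have hw_le : ∀ i : Fin l, pw i = pw ⟨0, hl⟩ ∨ Pi (pw ⟨0, hl⟩) (pw i) := by
    intro i
    by_cases h : i.val = 0
    · left; exact congrArg pw (Fin.ext h.symm).symm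
    · right; exact (horder _ _).mpr (Fin.lt_def.mpr (by simp; omega))
  have hw_ge : ∀ i : Fin l, pw i = pw ⟨l - 1, hl1⟩ ∨ Pi (pw i) (pw ⟨l - 1, hl1⟩) := by
    intro i
    by_cases h : i.val = l - 1
    · left; exact congrArg pw (Fin.ext h)
    · right
      refine (horder _ _).mpr (Fin.lt_def.mpr ?_)
      have := i.isLt
      simp
      omega
  have hp1seg : pw ⟨l - 1, hl1⟩ ∈ seg Pi (pw ⟨0, hl⟩) (pw ⟨l - 1, hl1⟩) :=
    ⟨hw_le ⟨l - 1, hl1⟩, Or.inl rfl⟩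
  -- Case analysis on position of cj
  by_cases hcjp0 : Pi cj (pw ⟨0, hl⟩)
  · -- Case A: cj strictly above pw_0; then ck strictly above pw_0 too
    have hnp1ck : ¬ Pi (pw ⟨l - 1, hl1⟩) ck := fun h => hnot1 ⟨hcjp0, h⟩
    have hckseg : ck ∉ seg Pi (pw ⟨0, hl⟩) (pw ⟨l - 1, hl1⟩) := fun h => hnot2 ⟨hcjp0, h⟩
    have hckp1 : Pi ck (pw ⟨l - 1, hl1⟩) := by
      by_cases h : ck = pw ⟨l - 1, hl1⟩
      · exact absurd (h ▸ hp1seg) hckseg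
      · exact totPi _ _ (fun hh => h hh.symm) hnp1ck
    have hckp0 : Pi ck (pw ⟨0, hl⟩) := by
      have h2 : ¬ (ck = pw ⟨0, hl⟩ ∨ Pi (pw ⟨0, hl⟩) ck) :=
        fun hor => hckseg ⟨hor, Or.inr hckp1⟩
      push_neg at h2
      exact totPi _ _ (fun hh => h2.1 hh.symm) h2.2
    have hball : ∀ w ∈ Set.range pw, borda P' w = borda Pi w := by
      rintro w ⟨i, rfl⟩
      apply hb_out
      have hckw : Pi ck (pw i) := by
        rcases hw_le i with h | h
        · rw [h]; exact hckp0
        · exact hPi.2.2 _ _ _ hckp0 h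
      rintro ⟨-, h2⟩
      rcases h2 with h | h
      · exact hPi.2.1 ck (h ▸ hckw)
      · exact asymPi hckw h
    obtain ⟨s, hposs, w', w, hw', hw, h3⟩ := hdom2
    exact no_strict htb hPi hP'pref hball s hposs w' w hw' hw h3
  · by_cases hp1cj : Pi (pw ⟨l - 1, hl1⟩) cj
    · -- Case C: cj strictly below pw_{l-1}
      have hball : ∀ w ∈ Set.range pw, borda P' w = borda Pi w := by
        rintro w ⟨i, rfl⟩
        apply hb_out
        have hwcj : Pi (pw i) cj := by
          rcases hw_ge i with h | h
          · rw [h]; exact hp1cj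
          · exact hPi.2.2 _ _ _ h hp1cj
        rintro ⟨h1, -⟩
        rcases h1 with h | h
        · exact hPi.2.1 cj (h ▸ hwcj)
        · exact asymPi h hwcj
      obtain ⟨s, hposs, w', w, hw', hw, h3⟩ := hdom2
      exact no_strict htb hPi hP'pref hball s hposs w' w hw' hw h3
    · -- Case B: cj (hence ck) in the segment [pw_0, pw_{l-1}]
      have hcjseg : cj ∈ seg Pi (pw ⟨0, hl⟩) (pw ⟨l - 1, hl1⟩) := by
        constructor
        · by_cases h : cj = pw ⟨0, hl⟩
          · exact Or.inl h
          · exact Or.inr (totPi _ _ h hcjp0)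
        · by_cases h : cj = pw ⟨l - 1, hl1⟩
          · exact Or.inl h
          · exact Or.inr (totPi _ _ (fun hh => h hh.symm) hp1cj)
      have hnp1ck : ¬ Pi (pw ⟨l - 1, hl1⟩) ck := fun h => hnot3 ⟨h, hcjseg⟩
      have ht_p0 : borda P' (pw ⟨0, hl⟩) ≤ borda Pi (pw ⟨0, hl⟩) := by
        by_cases h : pw ⟨0, hl⟩ ∈ S
        · have he : pw ⟨0, hl⟩ = cj := by
            rcases h.1 with h1 | h1
            · exact h1
            · exact absurd h1 hcjp0
          rw [he]; exact hb_cj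
        · exact le_of_eq (hb_out _ h)
      have ht_p1 : borda Pi (pw ⟨l - 1, hl1⟩) ≤ borda P' (pw ⟨l - 1, hl1⟩) := by
        by_cases h : pw ⟨l - 1, hl1⟩ ∈ S
        · have he : pw ⟨l - 1, hl1⟩ = ck := by
            rcases h.2 with h1 | h1
            · exact h1
            · exact absurd h1 hnp1ck
          rw [he]; exact hb_ck
        · exact le_of_eq (hb_out _ h).symm
      by_cases hall : ∀ w ∈ Set.range pw, borda P' w = borda Pi w
      · obtain ⟨s, hposs, w', w, hw', hw, h3⟩ := hdom2
        exact no_strict htb hPi hP'pref hall s hposs w' w hw' hw h3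
      · push_neg at hall
        obtain ⟨w₀, hw₀mem, hne₀⟩ := hall
        obtain ⟨i, rfl⟩ := hw₀mem
        rcases Nat.lt_or_ge (borda P' (pw i)) (borda Pi (pw i)) with hlt₀ | hge₀
        · -- pw i loses Borda: bad pair (pw i, pw_{l-1})
          have hxy : Pi (pw i) (pw ⟨l - 1, hl1⟩) := by
            rcases hw_ge i with h | h
            · exfalso; rw [h] at hlt₀; omega
            · exact h
          have hineq : borda P' (pw i) + borda Pi (pw ⟨l - 1, hl1⟩) <
              borda Pi (pw i) + borda P' (pw ⟨l - 1, hl1⟩) := by omega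
          obtain ⟨s, hposs, hwY, hwX⟩ :=
            bad_world tb htb (Set.range pw) Pi P' hPi hP'pref (pw i) (pw ⟨l - 1, hl1⟩)
              ⟨i, rfl⟩ ⟨⟨l - 1, hl1⟩, rfl⟩ hxy hineq
          rcases hdom1 s hposs (pw ⟨l - 1, hl1⟩) (pw i) hwY hwX with h | h
          · exact hPi.2.1 (pw i) (h ▸ hxy)
          · exact asymPi hxy h
        · -- pw i gains Borda: bad pair (pw_0, pw i)
          have hgt₀ : borda Pi (pw i) < borda P' (pw i) := by omega
          have hxy : Pi (pw ⟨0, hl⟩) (pw i) := by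
            rcases hw_le i with h | h
            · exfalso; rw [h] at hgt₀; omega
            · exact h
          have hineq : borda P' (pw ⟨0, hl⟩) + borda Pi (pw i) <
              borda Pi (pw ⟨0, hl⟩) + borda P' (pw i) := by omega
          obtain ⟨s, hposs, hwY, hwX⟩ :=
            bad_world tb htb (Set.range pw) Pi P' hPi hP'pref (pw ⟨0, hl⟩) (pw i)
              ⟨⟨0, hl⟩, rfl⟩ ⟨i, rfl⟩ hxy hineq
          rcases hdom1 s hposs (pw i) (pw ⟨0, hl⟩) hwY hwX with h | h
          · exact hPi.2.1 (pw ⟨0, hl⟩) (h ▸ hxy)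
          · exact asymPi hxy h
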